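/- Let X and Y be pseudometric spaces and f : X → Y a map. Then f is bornologous if and only if *f preserves finite closeness, i.e. for all x, x' : *X, x ∼ x' implies *f x ∼ *f x'. -/

import Mathlib

open Filter

/-- The nonstandard extension `*S` of a type `S`, realised as germs along the
hyperfilter on `ℕ` (a nonprincipal ultrafilter). -/
abbrev St (S : Type*) : Type _ := Filter.Germ (↑(Filter.hyperfilter ℕ) : Filter ℕ) S

/-- `*d`, the componentwise lift of the distance to the nonstandard extension. -/
noncomputable def starDist {X : Type*} [PseudoMetricSpace X] (x y : St X) : St ℝ :=
  Filter.Germ.map₂ dist x y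

/-- `x ∼ y` : two points of `*X` are finitely close if `*d x y ≤ *r` for some real `r`. -/
def FinClose {X : Type*} [PseudoMetricSpace X] (x y : St X) : Prop :=
  ∃ r : ℝ, starDist x y ≤ (↑r : St ℝ)

/-- `FIN(X,ξ)` : the points of `*X` finitely close to the base point. -/
def FIN {X : Type*} [PseudoMetricSpace X] (ξ : X) : Set (St X) :=
  {x | FinClose x (↑ξ : St X)}

/-- `INF(X,ξ)` : the infinite points of `*X` relative to the base point. -/
def INF {X : Type*} [PseudoMetricSpace X] (ξ : X) : Set (St X) :=
  {x | ¬ FinClose x (↑ξ : St X)}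

/-- A subset of a pseudometric space is bounded. -/
def BoundedSet {X : Type*} [PseudoMetricSpace X] (B : Set X) : Prop :=
  ∃ r : ℝ, ∀ a ∈ B, ∀ b ∈ B, dist a b ≤ r

/-- A map of pseudometric spaces is bornologous. -/
def Bornologous {X Y : Type*} [PseudoMetricSpace X] [PseudoMetricSpace Y] (f : X → Y) : Prop :=
  ∀ r : ℝ, ∃ s : ℝ, ∀ x x' : X, dist x x' ≤ r → dist (f x) (f x') ≤ s

/-- `f` is proper at the base point `η`: preimages of bounded sets containing `η`
are bounded. -/
def ProperAt {X Y : Type*} [PseudoMetricSpace X] [PseudoMetricSpace Y]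
    (f : X → Y) (η : Y) : Prop :=
  ∀ B : Set Y, η ∈ B → BoundedSet B → BoundedSet (f ⁻¹' B)

/-- `(N, s)` is an internal hyperfinite chain in `B ⊆ *X` from `x` to `y`. -/
def InternalChain {X : Type*} [PseudoMetricSpace X] (B : Set (St X)) (x y : St X)
    (N : ℕ → ℕ) (s : ℕ → ℕ → X) : Prop :=
  (↑(fun n => s n 0) : St X) = x ∧
  (↑(fun n => s n (N n)) : St X) = y ∧
  (∀ g : ℕ → ℕ, (∀ᶠ n in (↑(Filter.hyperfilter ℕ) : Filter ℕ), g n ≤ N n) →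
    (↑(fun n => s n (g n)) : St X) ∈ B) ∧
  (∀ g : ℕ → ℕ, (∀ᶠ n in (↑(Filter.hyperfilter ℕ) : Filter ℕ), g n < N n) →
    FinClose (↑(fun n => s n (g n)) : St X) (↑(fun n => s n (g n + 1)) : St X))

/-- `B ⊆ *X` is macrochain-connected. -/
def MacroChainConnected {X : Type*} [PseudoMetricSpace X] (B : Set (St X)) : Prop :=
  ∀ x ∈ B, ∀ y ∈ B, ∃ N s, InternalChain B x y N s

/-- `x ≡ι y` : `x` and `y` are joined by an internal hyperfinite chain lying in `INF(X,ξ)`. -/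
def IotaEquiv {X : Type*} [PseudoMetricSpace X] (ξ : X) (x y : St X) : Prop :=
  ∃ N s, InternalChain (INF ξ) x y N s

/-- An element of `*ℕ` is infinite. -/
def InfiniteHypernat (i : St ℕ) : Prop := ∀ m : ℕ, ¬ i ≤ (↑m : St ℕ)

/-- A coarse sequence : a bornologous and proper map `ℕ → X`. -/
def CoarseSeq {X : Type*} [PseudoMetricSpace X] (s : ℕ → X) : Prop :=
  (∀ k : ℕ, ∃ r : ℝ, ∀ m n : ℕ, Nat.dist m n ≤ k → dist (s m) (s n) ≤ r) ∧
  (∀ B : Set X, BoundedSet B → (s ⁻¹' B).Finite)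

/-- `s ⊑ t` for coarse sequences : `s` is a subsequence of `t`. -/
def SubCoarse {X : Type*} [PseudoMetricSpace X] (s t : ℕ → X) : Prop :=
  CoarseSeq s ∧ CoarseSeq t ∧ ∃ κ : ℕ → ℕ, StrictMono κ ∧ s = t ∘ κ

/-- `s ≡σ t` : the equivalence relation generated by `⊑` on coarse sequences. -/
def SigmaEquiv {X : Type*} [PseudoMetricSpace X] (s t : ℕ → X) : Prop :=
  Relation.EqvGen SubCoarse s t

/-- `(X, ξ)` is non-scattering at infinity. -/
def NonScattering {X : Type*} [PseudoMetricSpace X] (ξ : X) : Prop :=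
  ∃ r : ℝ, ∀ A : Set X, ξ ∈ A → BoundedSet A →
    ∀ x ∈ Aᶜ, ∀ y ∈ Aᶜ, ∃ n : ℕ, ∃ c : ℕ → X, c 0 = x ∧ c n = y ∧
      (∀ i ≤ n, c i ∈ Aᶜ) ∧ (∀ i < n, dist (c i) (c (i + 1)) ≤ r)
/-- A map between pseudometric spaces is bornologous iff its nonstandard extension
preserves finite closeness. -/
theorem bornologous_iff_map_finClose {X Y : Type*} [PseudoMetricSpace X] [PseudoMetricSpace Y]
    (f : X → Y) :
    Bornologous f ↔
      ∀ x x' : St X, FinClose x x' → FinClose (x.map f) (x'.map f) := by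
  constructor
  · intro hb x x'
    refine Filter.Germ.inductionOn₂ x x' fun u v h => ?_
    obtain ⟨r, hr⟩ := h
    obtain ⟨s, hs⟩ := hb r
    refine ⟨s, ?_⟩
    have hr' : ∀ᶠ n in (↑(Filter.hyperfilter ℕ) : Filter ℕ), dist (u n) (v n) ≤ r := by
      exact hr
    have : ∀ᶠ n in (↑(Filter.hyperfilter ℕ) : Filter ℕ), dist (f (u n)) (f (v n)) ≤ s :=
      hr'.mono fun n hn => hs _ _ hn
    exact this
  · intro h
    by_contra hb
    simp only [Bornologous, not_forall, not_exists] at hb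
    obtain ⟨r, hr⟩ := hb
    choose u v hd hfd using fun n : ℕ => by
      have := hr (n : ℝ)
      push_neg at this
      exact this
    have hc : FinClose (↑u : St X) (↑v : St X) := by
      refine ⟨r, ?_⟩
      simp only [starDist, Filter.Germ.map₂, ← Filter.Germ.coe_le]
      exact Filter.Eventually.of_forall hd
    obtain ⟨s, hs⟩ := h _ _ hc
    have hs' : ∀ᶠ n in (↑(Filter.hyperfilter ℕ) : Filter ℕ), dist (f (u n)) (f (v n)) ≤ s := by
      exact hs
    have hsub : {n : ℕ | dist (f (u n)) (f (v n)) ≤ s} ⊆ {n : ℕ | (n : ℝ) ≤ s} := by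
      intro n hn
      exact le_trans (hfd n).le hn
    have hfin : {n : ℕ | (n : ℝ) ≤ s}.Finite := by
      rcases exists_nat_gt s with ⟨m, hm⟩
      exact Set.Finite.subset (Set.finite_Iio m) fun n hn =>
        Nat.cast_lt.mp (lt_of_le_of_lt hn hm)
    exact (Set.Finite.subset hfin hsub).notMem_hyperfilter hs'
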